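/- If γ̂ minimizes the Lasso-penalized calibration objective L over ℝ^{1+p}, then for every j ∈ {1,…,p} the weighted average of the j-th covariate over the instrumented group is calibrated to the overall average within tolerance λ: | (1/n)·Σ_{i=1}^n Z_i·f_{ij}/π̂_i − (1/n)·Σ_{i=1}^n f_{ij} | ≤ λ, and if moreover γ̂_j ≠ 0 then this inequality holds with equality. -/

import Mathlib

open Finset

lemma right_deriv_nonneg' {h : ℝ → ℝ} {d : ℝ} (hd : HasDerivAt h d 0)
    (hm : ∀ᶠ t in nhdsWithin 0 (Set.Ioi 0), h 0 ≤ h t) : 0 ≤ d := by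
  rw [hasDerivAt_iff_tendsto_slope] at hd
  have h2 : Filter.Tendsto (slope h 0) (nhdsWithin 0 (Set.Ioi 0)) (nhds d) :=
    hd.mono_left (nhdsWithin_mono _ (fun t ht => ne_of_gt ht))
  refine ge_of_tendsto h2 ?_
  filter_upwards [hm, self_mem_nhdsWithin] with t ht ht'
  rw [slope_def_field]
  have : (0:ℝ) < t - 0 := by simpa using ht'
  exact div_nonneg (by linarith) (by linarith)

lemma left_deriv_nonpos' {h : ℝ → ℝ} {d : ℝ} (hd : HasDerivAt h d 0)
    (hm : ∀ᶠ t in nhdsWithin 0 (Set.Iio 0), h 0 ≤ h t) : d ≤ 0 := by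
  rw [hasDerivAt_iff_tendsto_slope] at hd
  have h2 : Filter.Tendsto (slope h 0) (nhdsWithin 0 (Set.Iio 0)) (nhds d) :=
    hd.mono_left (nhdsWithin_mono _ (fun t ht => ne_of_lt ht))
  refine le_of_tendsto h2 ?_
  filter_upwards [hm, self_mem_nhdsWithin] with t ht ht'
  rw [slope_def_field]
  have : t - 0 < (0:ℝ) := by simpa using ht'
  exact div_nonpos_of_nonneg_of_nonpos (by linarith) (by linarith)

/-- If `γ̂` minimizes the Lasso-penalized calibration objective, each covariate is
calibrated within tolerance `λ`, with equality at active coordinates. -/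
theorem stmt_6 (n p : ℕ) (hn : 1 ≤ n) (hp : 1 ≤ p)
    (Z : Fin n → ℝ) (hZ : ∀ i, Z i = 0 ∨ Z i = 1)
    (f : Fin n → Fin (p + 1) → ℝ) (hf0 : ∀ i, f i 0 = 1)
    (lam : ℝ) (hlam : 0 ≤ lam)
    (L : (Fin (p + 1) → ℝ) → ℝ)
    (hL : ∀ γ, L γ = (1 / (n : ℝ)) * ∑ i, (Z i * Real.exp (-(∑ j, γ j * f i j))
          + (1 - Z i) * (∑ j, γ j * f i j))
        + lam * ∑ j : Fin p, |γ j.succ|)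
    (γhat : Fin (p + 1) → ℝ) (hmin : ∀ γ, L γhat ≤ L γ)
    (πhat : Fin n → ℝ)
    (hπ : ∀ i, πhat i = 1 / (1 + Real.exp (-(∑ j, γhat j * f i j)))) :
    ∀ j : Fin p,
      |(1 / (n : ℝ)) * ∑ i, Z i * f i j.succ / πhat i
          - (1 / (n : ℝ)) * ∑ i, f i j.succ| ≤ lam ∧
      (γhat j.succ ≠ 0 →
        |(1 / (n : ℝ)) * ∑ i, Z i * f i j.succ / πhat i
            - (1 / (n : ℝ)) * ∑ i, f i j.succ| = lam) := by
  intro j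
  set c : Fin n → ℝ := fun i => f i j.succ with hc
  set a : Fin n → ℝ := fun i => ∑ k, γhat k * f i k with ha
  set D : ℝ := (1 / (n : ℝ)) * ∑ i, ((1 - Z i) - Z i * Real.exp (-(a i))) * c i with hD
  -- Step 1: the target quantity is `-D`
  have hkey : ∀ i, Z i * c i / πhat i - c i
      = -(((1 - Z i) - Z i * Real.exp (-(a i))) * c i) := by
    intro i
    have hepos : (0:ℝ) < 1 + Real.exp (-(a i)) := by positivity
    rcases hZ i with h | h
    · simp [h]
    · rw [hπ i, h]
      field_simp
      ring
  have htarget : (1 / (n : ℝ)) * ∑ i, Z i * c i / πhat i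
      - (1 / (n : ℝ)) * ∑ i, c i = -D := by
    have hsum : ∑ i, (Z i * c i / πhat i - c i)
        = -∑ i, ((1 - Z i) - Z i * Real.exp (-(a i))) * c i := by
      rw [← Finset.sum_neg_distrib]
      exact Finset.sum_congr rfl fun i _ => hkey i
    rw [hD, ← mul_sub, ← Finset.sum_sub_distrib, hsum]
    ring
  -- Step 2: the perturbed parameter and the smooth part of the objective
  set γt : ℝ → (Fin (p + 1) → ℝ) :=
    fun t k => if k = j.succ then γhat k + t else γhat k with hγt
  set φ : ℝ → ℝ := fun t => (1 / (n : ℝ)) *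
    ∑ i, (Z i * Real.exp (-(a i + t * c i)) + (1 - Z i) * (a i + t * c i)) with hφdef
  have hinner : ∀ t i, (∑ k, γt t k * f i k) = a i + t * c i := by
    intro t i
    have : ∀ k : Fin (p + 1), γt t k * f i k
        = γhat k * f i k + (if k = j.succ then t * f i k else 0) := by
      intro k
      by_cases hk : k = j.succ <;> simp [hγt, hk] <;> ring
    rw [Finset.sum_congr rfl fun k _ => this k, Finset.sum_add_distrib,
      Finset.sum_ite_eq' Finset.univ j.succ (fun k => t * f i k)]
    simp [ha, hc]
  have hpen : ∀ t, (∑ k : Fin p, |γt t k.succ|)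
      = (∑ k : Fin p, |γhat k.succ|) + (|γhat j.succ + t| - |γhat j.succ|) := by
    intro t
    have : ∀ k : Fin p, |γt t k.succ|
        = |γhat k.succ| + (if k = j then |γhat j.succ + t| - |γhat j.succ| else 0) := by
      intro k
      by_cases hk : k = j
      · simp [hγt, hk]
      · have : ¬ (k.succ = j.succ) := fun h => hk (Fin.succ_inj.mp h)
        simp [hγt, this, hk]
    rw [Finset.sum_congr rfl fun k _ => this k, Finset.sum_add_distrib,
      Finset.sum_ite_eq' Finset.univ j
        (fun _ => |γhat j.succ + t| - |γhat j.succ|)]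
    simp
  have hLval : ∀ t, L (γt t) = φ t + lam * (|γhat j.succ + t| - |γhat j.succ|)
      + lam * ∑ k : Fin p, |γhat k.succ| := by
    intro t
    rw [hL (γt t)]
    have h1 : ∀ i : Fin n, Z i * Real.exp (-(∑ k, γt t k * f i k))
        + (1 - Z i) * (∑ k, γt t k * f i k)
        = Z i * Real.exp (-(a i + t * c i)) + (1 - Z i) * (a i + t * c i) := by
      intro i; rw [hinner t i]
    rw [Finset.sum_congr rfl fun i _ => h1 i, hpen t, hφdef]
    ring
  have hγt0 : γt 0 = γhat := by
    funext k; by_cases hk : k = j.succ <;> simp [hγt, hk]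
  have hL0 : L γhat = φ 0 + lam * ∑ k : Fin p, |γhat k.succ| := by
    have := hLval 0
    rw [hγt0] at this
    simpa using this
  -- the key minimization inequality
  have hM : ∀ t, φ 0 + lam * |γhat j.succ| ≤ φ t + lam * |γhat j.succ + t| := by
    intro t
    have := hmin (γt t)
    rw [hLval t, hL0] at this
    nlinarith [this]
  -- Step 3: φ has derivative D at 0
  have hφ : HasDerivAt φ D 0 := by
    have hterm : ∀ i : Fin n, HasDerivAt
        (fun t => Z i * Real.exp (-(a i + t * c i)) + (1 - Z i) * (a i + t * c i))
        (((1 - Z i) - Z i * Real.exp (-(a i))) * c i) 0 := by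
      intro i
      have h1 : HasDerivAt (fun t : ℝ => a i + t * c i) (c i) 0 := by
        simpa using ((hasDerivAt_id (0:ℝ)).mul_const (c i)).const_add (a i)
      have h2 : HasDerivAt (fun t : ℝ => Real.exp (-(a i + t * c i)))
          (Real.exp (-(a i + 0 * c i)) * -(c i)) 0 := h1.neg.exp
      have h3 := (h2.const_mul (Z i)).fun_add (h1.const_mul (1 - Z i))
      refine h3.congr_deriv ?_
      rw [zero_mul, add_zero]
      ring
    have hsum : HasDerivAt
        (fun t => ∑ i, (Z i * Real.exp (-(a i + t * c i)) + (1 - Z i) * (a i + t * c i)))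
        (∑ i, ((1 - Z i) - Z i * Real.exp (-(a i))) * c i) 0 :=
      HasDerivAt.fun_sum fun i _ => hterm i
    simpa [hφdef, hD] using hsum.const_mul (1 / (n : ℝ))
  -- Step 4: KKT conditions via one-sided derivatives
  have main : |D| ≤ lam ∧ (γhat j.succ ≠ 0 → |D| = lam) := by
    set b : ℝ := γhat j.succ with hb
    rcases lt_trichotomy b 0 with hbneg | hbzero | hbpos
    · -- b < 0 : |b+t| = -(b+t) near 0, derivative D - lam = 0
      have hder : HasDerivAt (fun t => φ t - lam * (b + t)) (D - lam) 0 := by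
        have := hφ.fun_sub (((hasDerivAt_id (0:ℝ)).const_add b).const_mul lam)
        simpa using this
      have hloc : IsLocalMin (fun t => φ t - lam * (b + t)) 0 := by
        have hnb : Set.Ioo b (-b) ∈ nhds (0:ℝ) := Ioo_mem_nhds hbneg (by linarith)
        filter_upwards [hnb] with t ht
        have habs : |b + t| = -(b + t) := abs_of_neg (by rcases ht with ⟨_, h2⟩; linarith)
        have habs0 : |b| = -b := abs_of_neg hbneg
        have h1 := hM t
        rw [habs, habs0] at h1
        show φ 0 - lam * (b + 0) ≤ φ t - lam * (b + t)
        linarith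
      have hz : D - lam = 0 := hloc.hasDerivAt_eq_zero hder
      have : D = lam := by linarith
      constructor
      · rw [this, abs_of_nonneg hlam]
      · intro _; rw [this, abs_of_nonneg hlam]
    · -- b = 0 : one-sided conditions give |D| ≤ lam
      have hright : (0:ℝ) ≤ D + lam := by
        apply right_deriv_nonneg' (h := fun t => φ t + lam * t)
        · have := hφ.fun_add ((hasDerivAt_id (0:ℝ)).const_mul lam)
          simpa using this
        · filter_upwards [self_mem_nhdsWithin] with t (ht : t ∈ Set.Ioi 0)
          have h1 := hM t
          rw [hbzero] at h1
          have h2 : |(0:ℝ) + t| = t := by rw [zero_add, abs_of_pos ht]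
          rw [h2, abs_zero] at h1
          show φ 0 + lam * 0 ≤ φ t + lam * t
          linarith
      have hleft : D - lam ≤ 0 := by
        apply left_deriv_nonpos' (h := fun t => φ t - lam * t)
        · have := hφ.fun_sub ((hasDerivAt_id (0:ℝ)).const_mul lam)
          simpa using this
        · filter_upwards [self_mem_nhdsWithin] with t (ht : t ∈ Set.Iio 0)
          have h1 := hM t
          rw [hbzero] at h1
          have h2 : |(0:ℝ) + t| = -t := by rw [zero_add, abs_of_neg ht]
          rw [h2, abs_zero] at h1
          show φ 0 - lam * 0 ≤ φ t - lam * t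
          linarith
      constructor
      · rw [abs_le]; constructor <;> linarith
      · intro hne; exact absurd hbzero hne
    · -- b > 0 : |b+t| = b+t near 0, derivative D + lam = 0
      have hder : HasDerivAt (fun t => φ t + lam * (b + t)) (D + lam) 0 := by
        have := hφ.fun_add (((hasDerivAt_id (0:ℝ)).const_add b).const_mul lam)
        simpa using this
      have hloc : IsLocalMin (fun t => φ t + lam * (b + t)) 0 := by
        have hnb : Set.Ioo (-b) b ∈ nhds (0:ℝ) := Ioo_mem_nhds (by linarith) hbpos
        filter_upwards [hnb] with t ht
        have habs : |b + t| = b + t := abs_of_pos (by rcases ht with ⟨h1, _⟩; linarith)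
        have habs0 : |b| = b := abs_of_pos hbpos
        have h1 := hM t
        rw [habs, habs0] at h1
        show φ 0 + lam * (b + 0) ≤ φ t + lam * (b + t)
        linarith
      have hz : D + lam = 0 := hloc.hasDerivAt_eq_zero hder
      have : D = -lam := by linarith
      constructor
      · rw [this, abs_neg, abs_of_nonneg hlam]
      · intro _; rw [this, abs_neg, abs_of_nonneg hlam]
  -- Conclusion
  have heq : (1 / (n : ℝ)) * ∑ i, Z i * f i j.succ / πhat i
      - (1 / (n : ℝ)) * ∑ i, f i j.succ = -D := htarget
  rw [heq, abs_neg]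
  exact main
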